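/- Let Δ ⊂ ℝⁿ be an n-dimensional integral Delzant polytope and i a positive integer. Assume the Chow semistability criterion holds: E_Δ(i) ∫_Δ g dv − vol(Δ) Σ_{a ∈ Δ ∩ (ℤ/i)ⁿ} g(a) ≥ 0 for every g ∈ PL(Δ;i). Then Σ_{a ∈ Δ ∩ (ℤ/i)ⁿ} a = (E_Δ(i)/vol(Δ)) ∫_Δ x dv, i.e., the average of the lattice points of Δ ∩ (1/i)ℤⁿ equals the barycenter of Δ. -/

import Mathlib

open MeasureTheory

noncomputable section

/-- The points of `(ℤ/i)ⁿ = (1/i)ℤⁿ` in `ℝⁿ`. -/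
def latticePts (n i : ℕ) : Set (EuclideanSpace ℝ (Fin n)) :=
  {x | ∀ j, ∃ m : ℤ, x j = (m : ℝ) / (i : ℝ)}

/-- The integer lattice `ℤⁿ ⊂ ℝⁿ`. -/
def intPts (n : ℕ) : Set (EuclideanSpace ℝ (Fin n)) :=
  {x | ∀ j, ∃ m : ℤ, x j = (m : ℝ)}

/-- An `n`-dimensional integral polytope: convex hull of finitely many lattice
points, with nonempty interior. -/
def IsIntegralPolytope {n : ℕ} (Δ : Set (EuclideanSpace ℝ (Fin n))) : Prop :=
  (∃ V : Finset (EuclideanSpace ℝ (Fin n)), (↑V : Set (EuclideanSpace ℝ (Fin n))) ⊆ intPts n ∧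
    Δ = convexHull ℝ (↑V : Set (EuclideanSpace ℝ (Fin n)))) ∧
  (interior Δ).Nonempty

/-- Delzant condition: an integral polytope such that at each vertex the polytope
locally looks like the cone over `n` integral edge vectors forming a ℤ-basis of ℤⁿ
(i.e. an integer matrix of determinant `±1`). -/
def IsDelzant {n : ℕ} (Δ : Set (EuclideanSpace ℝ (Fin n))) : Prop :=
  IsIntegralPolytope Δ ∧
  ∀ v ∈ Set.extremePoints ℝ Δ, ∃ M : Matrix (Fin n) (Fin n) ℤ,
    (M.det = 1 ∨ M.det = -1) ∧ ∃ ε : ℝ, 0 < ε ∧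
      Δ ∩ Metric.ball v ε =
        {x | ∃ c : Fin n → ℝ, (∀ j, 0 ≤ c j) ∧
            ∀ k, x k = v k + ∑ j, c j * (M j k : ℝ)} ∩ Metric.ball v ε

/-- The concave envelope `g_φ` of the data `(a, φ a)`, `a ∈ A`:
`g_φ x = max {t | (x,t) ∈ G_φ}` where `G_φ` is the convex hull of the downward
rays below the graph of `φ` over `A`. -/
def concaveEnv {n : ℕ} (A : Set (EuclideanSpace ℝ (Fin n)))
    (φ : EuclideanSpace ℝ (Fin n) → ℝ) (x : EuclideanSpace ℝ (Fin n)) : ℝ :=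
  sSup {t : ℝ | (x, t) ∈ convexHull ℝ
    {p : EuclideanSpace ℝ (Fin n) × ℝ | p.1 ∈ A ∧ p.2 ≤ φ p.1}}

/-- The Ehrhart polynomial property: `E(i) = #(Δ ∩ (1/i)ℤⁿ) = #(iΔ ∩ ℤⁿ)`. -/
def IsEhrhart {n : ℕ} (Δ : Set (EuclideanSpace ℝ (Fin n))) (E : Polynomial ℚ) : Prop :=
  ∀ i : ℕ, 0 < i → E.eval (i : ℚ) = Nat.card ↥(Δ ∩ latticePts n i)

/-- The lattice boundary measure `dσ` of the paper: it is supported on `∂Δ`, and on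
any piece of a hyperplane `{⟨u,·⟩ = c}` with `u` a primitive integral vector it equals
the `(n-1)`-dimensional Hausdorff measure divided by `‖u‖` (so that `dh ∧ dσ = dv`). -/
def IsLatticeBoundaryMeasure {n : ℕ} (Δ : Set (EuclideanSpace ℝ (Fin n)))
    (σ : Measure (EuclideanSpace ℝ (Fin n))) : Prop :=
  σ (frontier Δ)ᶜ = 0 ∧
  ∀ u : EuclideanSpace ℝ (Fin n), (∀ j, ∃ m : ℤ, u j = (m : ℝ)) →
    (¬ ∃ (w : EuclideanSpace ℝ (Fin n)) (k : ℕ), 2 ≤ k ∧ (∀ j, ∃ m : ℤ, w j = (m : ℝ)) ∧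
        u = (k : ℝ) • w) →
    ∀ c : ℝ, ∀ s : Set (EuclideanSpace ℝ (Fin n)), MeasurableSet s →
      s ⊆ frontier Δ ∩ {x | (inner ℝ u x : ℝ) = c} →
      σ s = μH[(n : ℝ) - 1] s / ENNReal.ofReal ‖u‖

/-- A rational convex piecewise linear function on `Δ`: a finite max of affine
functions with rational coefficients. -/
def IsRatConvexPL {n : ℕ} (Δ : Set (EuclideanSpace ℝ (Fin n)))
    (h : EuclideanSpace ℝ (Fin n) → ℝ) : Prop :=
  ∃ (N : ℕ) (q : Fin (N + 1) → Fin n → ℚ) (c : Fin (N + 1) → ℚ),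
    ∀ x ∈ Δ, h x = ⨆ l, (∑ j, (q l j : ℝ) * x j + (c l : ℝ))

/-- A rational concave piecewise linear function on `Δ`: a finite min of affine
functions with rational coefficients. -/
def IsRatConcavePL {n : ℕ} (Δ : Set (EuclideanSpace ℝ (Fin n)))
    (g : EuclideanSpace ℝ (Fin n) → ℝ) : Prop :=
  ∃ (N : ℕ) (q : Fin (N + 1) → Fin n → ℚ) (c : Fin (N + 1) → ℚ),
    ∀ x ∈ Δ, g x = ⨅ l, (∑ j, (q l j : ℝ) * x j + (c l : ℝ))

lemma finsum_mem_neg' {α : Type*} (s : Set α) (f : α → ℝ) :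
    ∑ᶠ a ∈ s, -(f a) = -∑ᶠ a ∈ s, f a := by
  rw [finsum_mem_def, finsum_mem_def, ← finsum_neg_distrib]
  congr 1
  ext a
  by_cases h : a ∈ s <;>
    simp [Set.indicator_of_mem, Set.indicator_of_notMem, h]

lemma concaveEnv_linear {n : ℕ} (A : Set (EuclideanSpace ℝ (Fin n)))
    (f : EuclideanSpace ℝ (Fin n) →ₗ[ℝ] ℝ) {x : EuclideanSpace ℝ (Fin n)}
    (hx : x ∈ convexHull ℝ A) : concaveEnv A (fun y => f y) x = f x := by
  unfold concaveEnv
  set S : Set (EuclideanSpace ℝ (Fin n) × ℝ) :=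
    {p | p.1 ∈ A ∧ p.2 ≤ f p.1} with hS
  have hub : ∀ t ∈ {t : ℝ | (x, t) ∈ convexHull ℝ S}, t ≤ f x := by
    intro t ht
    have hC : Convex ℝ {p : EuclideanSpace ℝ (Fin n) × ℝ | p.2 - f p.1 ≤ 0} := by
      have hlin : IsLinearMap ℝ (fun p : EuclideanSpace ℝ (Fin n) × ℝ => p.2 - f p.1) :=
        ((LinearMap.snd ℝ (EuclideanSpace ℝ (Fin n)) ℝ) -
          f.comp (LinearMap.fst ℝ (EuclideanSpace ℝ (Fin n)) ℝ)).isLinear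
      exact convex_halfSpace_le hlin 0
    have hsub : convexHull ℝ S ⊆ {p : EuclideanSpace ℝ (Fin n) × ℝ | p.2 - f p.1 ≤ 0} := by
      apply convexHull_min _ hC
      intro p hp
      simp only [Set.mem_setOf_eq] at hp ⊢
      linarith [hp.2]
    have := hsub ht
    simp only [Set.mem_setOf_eq] at this
    linarith
  have hmem : (x, f x) ∈ convexHull ℝ S := by
    let g : EuclideanSpace ℝ (Fin n) →ₗ[ℝ] EuclideanSpace ℝ (Fin n) × ℝ :=
      LinearMap.prod LinearMap.id f
    have h1 : g x ∈ g '' (convexHull ℝ A) := Set.mem_image_of_mem _ hx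
    rw [g.image_convexHull] at h1
    have hg : ∀ y, g y = (y, f y) := fun y => rfl
    have h2 : g '' A ⊆ S := by
      rintro p ⟨a, ha, rfl⟩
      rw [hg]
      exact ⟨ha, le_refl _⟩
    have h3 := convexHull_mono h2 h1
    rwa [hg] at h3
  exact le_antisymm (csSup_le ⟨f x, hmem⟩ hub) (le_csSup ⟨f x, hub⟩ hmem)

/-- Corollary 4.7: if the Chow semistability inequality holds for
all `g ∈ PL(Δ;i)` (here `E_Δ(i) = #(Δ ∩ (ℤ/i)ⁿ)`), then the sum of the lattice
points of `Δ ∩ (ℤ/i)ⁿ` equals `(E_Δ(i)/vol Δ) ∫_Δ x dv` componentwise. -/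
theorem stmt10 {n i : ℕ} (hn : 0 < n) (hi : 0 < i)
    (Δ : Set (EuclideanSpace ℝ (Fin n))) (hΔ : IsDelzant Δ)
    (hstab : ∀ φ : EuclideanSpace ℝ (Fin n) → ℝ,
      (Nat.card ↥(Δ ∩ latticePts n i) : ℝ) *
          (∫ x in Δ, concaveEnv (Δ ∩ latticePts n i) φ x) -
        (volume Δ).toReal *
          ∑ᶠ a ∈ Δ ∩ latticePts n i, concaveEnv (Δ ∩ latticePts n i) φ a ≥ 0) :
    ∀ j : Fin n, ∑ᶠ a ∈ Δ ∩ latticePts n i, a j =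
      (Nat.card ↥(Δ ∩ latticePts n i) : ℝ) / (volume Δ).toReal *
        ∫ x in Δ, x j :=  by
  obtain ⟨⟨⟨V, hVint, hVhull⟩, hint⟩, _⟩ := hΔ
  set A : Set (EuclideanSpace ℝ (Fin n)) := Δ ∩ latticePts n i with hA
  -- V ⊆ A
  have hVA : (↑V : Set (EuclideanSpace ℝ (Fin n))) ⊆ A := by
    intro v hv
    refine ⟨hVhull ▸ subset_convexHull ℝ _ hv, fun j => ?_⟩
    obtain ⟨m, hm⟩ := hVint hv j
    exact ⟨m * i, by rw [hm]; push_cast; field_simp⟩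
  have hconv : Convex ℝ Δ := hVhull ▸ convex_convexHull ℝ _
  have hΔhullA : Δ ⊆ convexHull ℝ A := by
    rw [hVhull]
    exact convexHull_mono hVA
  have hcompact : IsCompact Δ := hVhull ▸ V.finite_toSet.isCompact_convexHull ℝ
  have hmeas : MeasurableSet Δ := hcompact.isClosed.measurableSet
  -- volume facts
  have hvolpos : 0 < (volume Δ).toReal := by
    refine ENNReal.toReal_pos ?_ ?_
    · have : 0 < volume (interior Δ) := isOpen_interior.measure_pos volume hint
      exact fun h => absurd (measure_mono_null interior_subset h) this.ne'
    · exact (hcompact.isBounded.measure_lt_top).ne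
  intro j
  -- the coordinate functional
  set f : EuclideanSpace ℝ (Fin n) →ₗ[ℝ] ℝ :=
    (LinearMap.proj j : (Fin n → ℝ) →ₗ[ℝ] ℝ).comp
      (WithLp.linearEquiv 2 ℝ (Fin n → ℝ)).toLinearMap with hf
  have hfx : ∀ x : EuclideanSpace ℝ (Fin n), f x = x j := fun _ => rfl
  have key : ∀ g : EuclideanSpace ℝ (Fin n) →ₗ[ℝ] ℝ,
      (Nat.card ↥A : ℝ) * (∫ x in Δ, g x) - (volume Δ).toReal * ∑ᶠ a ∈ A, g a ≥ 0 := by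
    intro g
    have h := hstab (fun y => g y)
    have hI : (∫ x in Δ, concaveEnv A (fun y => g y) x) = ∫ x in Δ, g x := by
      refine setIntegral_congr_fun hmeas fun x hx => ?_
      exact concaveEnv_linear A g (hΔhullA hx)
    have hSsum : (∑ᶠ a ∈ A, concaveEnv A (fun y => g y) a) = ∑ᶠ a ∈ A, g a :=
      finsum_mem_congr rfl fun a ha => concaveEnv_linear A g (hΔhullA ha.1)
    rw [hI, hSsum] at h
    exact h
  have h1 := key f
  have h2 := key (-f)
  have hIneg : (∫ x in Δ, (-f) x) = -∫ x in Δ, f x := by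
    simp [integral_neg]
  have hSneg : (∑ᶠ a ∈ A, (-f) a) = -∑ᶠ a ∈ A, f a := by
    simpa using finsum_mem_neg' A (fun a => f a)
  rw [hIneg, hSneg] at h2
  have heq : (Nat.card ↥A : ℝ) * (∫ x in Δ, f x) = (volume Δ).toReal * ∑ᶠ a ∈ A, f a := by
    nlinarith [h1, h2]
  have hjf : (∑ᶠ a ∈ A, a j) = ∑ᶠ a ∈ A, f a := rfl
  have hjI : (∫ x in Δ, x j) = ∫ x in Δ, f x := rfl
  rw [hjf, hjI]
  field_simp
  linarith [heq]
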